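/- Let V be a finite set, succ : V → Finset V, c : V → ℝ≥0, and define for x ∈ [0,1]^V the multilinear-type extension F(x) = Σ_{v∈V} c_v·(1 − Π_{u∈{v}∪succ(v)}(1−x_u)) and the concave relaxation L(x) = Σ_{v∈V} c_v·min{1, Σ_{u∈{v}∪succ(v)} x_u}. Then (1 − 1/e)·L(x) ≤ F(x) ≤ L(x) for all x ∈ [0,1]^V. -/

import Mathlib

open Finset Real

private lemma prod_one_sub_ge {V : Type*} (s : Finset V) (x : V → ℝ)
    (hx : ∀ v, 0 ≤ x v ∧ x v ≤ 1) :
    1 - ∑ u ∈ s, x u ≤ ∏ u ∈ s, (1 - x u) := by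
  classical
  induction s using Finset.induction with
  | empty => simp
  | insert a s h ih =>
    rw [Finset.sum_insert h, Finset.prod_insert h]
    have hxa := hx a
    have hprod0 : (0:ℝ) ≤ ∏ u ∈ s, (1 - x u) :=
      Finset.prod_nonneg fun u _ => by linarith [(hx u).2]
    have hprod1 : ∏ u ∈ s, (1 - x u) ≤ 1 :=
      Finset.prod_le_one (fun u _ => by linarith [(hx u).2]) (fun u _ => by linarith [(hx u).1])
    nlinarith [ih]

private lemma prod_one_sub_le_exp {V : Type*} (s : Finset V) (x : V → ℝ)
    (hx : ∀ v, 0 ≤ x v ∧ x v ≤ 1) :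
    ∏ u ∈ s, (1 - x u) ≤ Real.exp (-∑ u ∈ s, x u) := by
  classical
  calc ∏ u ∈ s, (1 - x u) ≤ ∏ u ∈ s, Real.exp (-x u) := by
        apply Finset.prod_le_prod (fun u _ => by linarith [(hx u).2])
        intro u _
        linarith [Real.add_one_le_exp (-x u)]
    _ = Real.exp (∑ u ∈ s, -x u) := (Real.exp_sum s fun u => -x u).symm
    _ = Real.exp (-∑ u ∈ s, x u) := by rw [Finset.sum_neg_distrib]

private lemma term_sandwich {V : Type*} (s : Finset V) (x : V → ℝ)
    (hx : ∀ v, 0 ≤ x v ∧ x v ≤ 1) :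
    (1 - 1 / Real.exp 1) * min 1 (∑ u ∈ s, x u) ≤ 1 - ∏ u ∈ s, (1 - x u) ∧
    1 - ∏ u ∈ s, (1 - x u) ≤ min 1 (∑ u ∈ s, x u) := by
  set S := ∑ u ∈ s, x u with hS
  have hS0 : 0 ≤ S := Finset.sum_nonneg fun u _ => (hx u).1
  have hprod0 : (0:ℝ) ≤ ∏ u ∈ s, (1 - x u) :=
    Finset.prod_nonneg fun u _ => by linarith [(hx u).2]
  have hge := prod_one_sub_ge s x hx
  have hexp := prod_one_sub_le_exp s x hx
  have he : Real.exp 1 > 1 := by linarith [Real.add_one_le_exp (1:ℝ), Real.exp_pos 1]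
  constructor
  · rcases le_or_gt 1 S with h1 | h1
    · rw [min_eq_left h1, mul_one]
      have h2 : Real.exp (-S) ≤ Real.exp (-1) := Real.exp_le_exp.mpr (by linarith)
      have h3 : Real.exp (-1) = 1 / Real.exp 1 := by rw [Real.exp_neg, one_div]
      linarith
    · rw [min_eq_right h1.le]
      -- convexity: exp(-S) ≤ (1-S)·exp 0 + S·exp(-1)
      have hconv := convexOn_exp.2 (Set.mem_univ (0:ℝ)) (Set.mem_univ (-1:ℝ))
        (by linarith : (0:ℝ) ≤ 1 - S) hS0 (by ring)
      simp only [smul_eq_mul, mul_zero, mul_neg_one, zero_add, Real.exp_zero] at hconv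
      have h3 : Real.exp (-1) = 1 / Real.exp 1 := by rw [Real.exp_neg, one_div]
      rw [h3] at hconv
      have h4 : Real.exp (-S) ≤ (1 - S) * 1 + S * (1 / Real.exp 1) := hconv
      nlinarith
  · exact le_min (by linarith) (by linarith)

/-- the concave relaxation L sandwiches F: (1−1/e)L ≤ F ≤ L on [0,1]^V. -/
theorem caching_gain_concave_relaxation_sandwich {V : Type*} [Fintype V] [DecidableEq V]
    (succ : V → Finset V) (c : V → ℝ) (hc : ∀ v, 0 ≤ c v)
    (x : V → ℝ) (hx : ∀ v, 0 ≤ x v ∧ x v ≤ 1) :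
    (1 - 1 / Real.exp 1) *
        (∑ v, c v * min 1 (∑ u ∈ insert v (succ v), x u)) ≤
      ∑ v, c v * (1 - ∏ u ∈ insert v (succ v), (1 - x u)) ∧
    ∑ v, c v * (1 - ∏ u ∈ insert v (succ v), (1 - x u)) ≤
      ∑ v, c v * min 1 (∑ u ∈ insert v (succ v), x u) := by
  constructor
  · rw [Finset.mul_sum]
    apply Finset.sum_le_sum
    intro v _
    have h := (term_sandwich (insert v (succ v)) x hx).1
    have hcv := hc v
    calc (1 - 1 / Real.exp 1) * (c v * min 1 (∑ u ∈ insert v (succ v), x u))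
        = c v * ((1 - 1 / Real.exp 1) * min 1 (∑ u ∈ insert v (succ v), x u)) := by ring
      _ ≤ c v * (1 - ∏ u ∈ insert v (succ v), (1 - x u)) := by
          exact mul_le_mul_of_nonneg_left h hcv
  · apply Finset.sum_le_sum
    intro v _
    exact mul_le_mul_of_nonneg_left (term_sandwich (insert v (succ v)) x hx).2 (hc v)
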